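/- Let W ⊆ {0,1,…,b−1} with b ≥ 3 and 2 ≤ |W| < b, and Δ = log|W| / log b. Let c_0,…,c_{N−1} ∈ W and assume the infinite periodic word (c_0 c_1 ⋯ c_{N−1})^∞ has minimal period exactly N. Then gcd(c_0 b^{N−1} + c_1 b^{N−2} + ⋯ + c_{N−1}, b^N − 1) ≪ b^N / N^{1/Δ}, with implied constant depending only on b and W. -/

import Mathlib

private lemma geom_nat (b M : ℕ) (hb : 1 ≤ b) :
    (∑ k ∈ Finset.range M, b ^ k) * (b - 1) = b ^ M - 1 := by
  induction M with
  | zero => simp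
  | succ M ih =>
    have h1 : 1 ≤ b ^ M := Nat.one_le_pow _ _ hb
    have h3 : b ^ M ≤ b ^ (M + 1) := Nat.pow_le_pow_right hb (by omega)
    have h2 : b ^ M * (b - 1) = b ^ (M + 1) - b ^ M := by
      rw [Nat.mul_sub, Nat.mul_one, ← pow_succ]
    rw [Finset.sum_range_succ, Nat.add_mul, ih, h2]
    omega

private lemma digit_unique (b : ℕ) :
    ∀ (N : ℕ) (d e : ℕ → ℕ), (∀ i, i < N → d i < b) → (∀ i, i < N → e i < b) →
      (∑ i ∈ Finset.range N, d i * b ^ (N - 1 - i)) =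
        (∑ i ∈ Finset.range N, e i * b ^ (N - 1 - i)) →
      ∀ i, i < N → d i = e i := by
  intro N
  induction N with
  | zero => intro d e _ _ _ i hi; omega
  | succ n ih =>
    intro d e hd he hsum i hi
    have hsplit : ∀ f : ℕ → ℕ,
        (∑ i ∈ Finset.range (n + 1), f i * b ^ (n + 1 - 1 - i)) =
          (∑ i ∈ Finset.range n, f i * b ^ (n - 1 - i)) * b + f n := by
      intro f
      rw [Finset.sum_range_succ, Finset.sum_mul]
      congr 1
      · apply Finset.sum_congr rfl
        intro k hk
        have hk' := Finset.mem_range.mp hk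
        have h : n + 1 - 1 - k = (n - 1 - k) + 1 := by omega
        rw [h, pow_succ]; ring
      · simp
    rw [hsplit d, hsplit e] at hsum
    have hb0 : 0 < b := by
      rcases Nat.eq_zero_or_pos b with h | h
      · exact absurd (hd n (by omega)) (by omega)
      · exact h
    have hdn : d n < b := hd n (by omega)
    have hen : e n < b := he n (by omega)
    have hmd : ((∑ i ∈ Finset.range n, d i * b ^ (n - 1 - i)) * b + d n) % b = d n := by
      rw [add_comm, Nat.add_mul_mod_self_right, Nat.mod_eq_of_lt hdn]
    have hme : ((∑ i ∈ Finset.range n, e i * b ^ (n - 1 - i)) * b + e n) % b = e n := by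
      rw [add_comm, Nat.add_mul_mod_self_right, Nat.mod_eq_of_lt hen]
    have hmod : d n = e n := by
      rw [← hmd, ← hme, hsum]
    have hA : (∑ i ∈ Finset.range n, d i * b ^ (n - 1 - i)) =
        (∑ i ∈ Finset.range n, e i * b ^ (n - 1 - i)) := by
      have := hsum
      rw [hmod] at this
      have h2 : (∑ i ∈ Finset.range n, d i * b ^ (n - 1 - i)) * b =
          (∑ i ∈ Finset.range n, e i * b ^ (n - 1 - i)) * b := by omega
      exact Nat.eq_of_mul_eq_mul_right hb0 h2
    rcases Nat.lt_or_ge i n with h | h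
    · exact ih d e (fun k hk => hd k (by omega)) (fun k hk => he k (by omega)) hA i h
    · have : i = n := by omega
      rw [this, hmod]

private def wv (b N : ℕ) (c : ℕ → ℕ) (j : ℕ) : ℕ :=
  ∑ i ∈ Finset.range N, c ((i + j) % N) * b ^ (N - 1 - i)

private lemma wv_step (b N : ℕ) (c : ℕ → ℕ) (hb : 1 ≤ b) (hN : 1 ≤ N) (j : ℕ) :
    Nat.ModEq (b ^ N - 1) (wv b N c (j + 1)) (b * wv b N c j) := by
  obtain ⟨n, rfl⟩ : ∃ n, N = n + 1 := ⟨N - 1, by omega⟩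
  have hbN1 : Nat.ModEq (b ^ (n + 1) - 1) 1 (b ^ (n + 1)) :=
    (Nat.modEq_iff_dvd' (Nat.one_le_pow _ _ hb)).mpr dvd_rfl
  have e1 : b * wv b (n + 1) c j
      = (∑ i ∈ Finset.range n, c ((i + (j + 1)) % (n + 1)) * b ^ (n - i))
        + c (j % (n + 1)) * b ^ (n + 1) := by
    unfold wv
    rw [Finset.mul_sum, Finset.sum_range_succ']
    congr 1
    · apply Finset.sum_congr rfl
      intro k hk
      have hk' := Finset.mem_range.mp hk
      have h1 : k + 1 + j = k + (j + 1) := by omega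
      have h2 : n - k = (n + 1 - 1 - (k + 1)) + 1 := by omega
      rw [h1, h2, pow_succ]
      ring
    · have h3 : n + 1 - 1 - 0 = n := by omega
      rw [h3, zero_add, pow_succ]
      ring
  have e2 : wv b (n + 1) c (j + 1)
      = (∑ i ∈ Finset.range n, c ((i + (j + 1)) % (n + 1)) * b ^ (n - i))
        + c (j % (n + 1)) * 1 := by
    unfold wv
    rw [Finset.sum_range_succ]
    have h1 : n + (j + 1) = (n + 1) + j := by omega
    have h2 : n + 1 - 1 - n = 0 := by omega
    rw [h1, Nat.add_mod_left, h2, pow_zero]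
    simp only [Nat.add_sub_cancel]
  rw [e1, e2]
  exact Nat.ModEq.add_left _ (Nat.ModEq.mul_left _ hbN1)

private lemma wv_dvd (b N : ℕ) (c : ℕ → ℕ) (hb : 1 ≤ b) (hN : 1 ≤ N) (g : ℕ)
    (hgS : g ∣ wv b N c 0) (hgD : g ∣ b ^ N - 1) : ∀ j, g ∣ wv b N c j := by
  intro j
  induction j with
  | zero => exact hgS
  | succ j ih =>
    have hstep := (wv_step b N c hb hN j).dvd
    have h1 : (g : ℤ) ∣ (b : ℤ) * wv b N c j - wv b N c (j + 1) := by
      exact dvd_trans (Int.natCast_dvd_natCast.mpr hgD) hstep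
    have h2 : (g : ℤ) ∣ (b : ℤ) * wv b N c j :=
      Dvd.dvd.mul_left (Int.natCast_dvd_natCast.mpr ih) _
    have h3 : (g : ℤ) ∣ (wv b N c (j + 1) : ℤ) := by
      have := dvd_sub h2 h1
      simpa using this
    exact_mod_cast h3

private lemma wv_inj (b N : ℕ) (c : ℕ → ℕ) (hN : 1 ≤ N) (hdig : ∀ k, k < N → c k < b)
    (hmin : ∀ P : ℕ, 0 < P → (∀ j : ℕ, c ((j + P) % N) = c (j % N)) → N ≤ P) :
    ∀ j1 j2, j1 < N → j2 < N → wv b N c j1 = wv b N c j2 → j1 = j2 := by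
  suffices H : ∀ j1 j2, j1 ≤ j2 → j2 < N → wv b N c j1 = wv b N c j2 → j1 = j2 by
    intro j1 j2 h1 h2 he
    rcases le_total j1 j2 with h | h
    · exact H j1 j2 h h2 he
    · exact (H j2 j1 h h1 he.symm).symm
  intro j1 j2 hle h2 he
  by_contra hne
  have hP : 0 < j2 - j1 := by omega
  have hdigeq : ∀ i, i < N → c ((i + j1) % N) = c ((i + j2) % N) := by
    apply digit_unique b N _ _
      (fun i _ => hdig _ (Nat.mod_lt _ (by omega)))
      (fun i _ => hdig _ (Nat.mod_lt _ (by omega)))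
    exact he
  have hper : ∀ j : ℕ, c ((j + (j2 - j1)) % N) = c (j % N) := by
    intro j
    set r := j % N with hr
    have hrN : r < N := Nat.mod_lt _ (by omega)
    set i := (r + N - j1) % N with hi
    have hiN : i < N := Nat.mod_lt _ (by omega)
    have key1 : (i + j1) % N = r := by
      have h1 : ((r + N - j1) % N + j1) % N = ((r + N - j1) + j1) % N :=
        (Nat.mod_modEq (r + N - j1) N).add_right j1
      have h3 : (r + N - j1) + j1 = r + N := by omega
      rw [← hi] at h1
      rw [h1, h3, Nat.add_mod_right, Nat.mod_eq_of_lt hrN]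
    have key2 : (i + j2) % N = (r + (j2 - j1)) % N := by
      have h1 : i + j2 = (i + j1) + (j2 - j1) := by omega
      have h4 : ((i + j1) % N + (j2 - j1)) % N = ((i + j1) + (j2 - j1)) % N :=
        (Nat.mod_modEq (i + j1) N).add_right _
      rw [h1, ← h4, key1]
    have h3 : (j + (j2 - j1)) % N = (r + (j2 - j1)) % N := by
      have := (Nat.mod_modEq j N).add_right (j2 - j1)
      rw [← hr] at this
      exact this.symm
    rw [h3, ← key2, ← key1]
    exact (hdigeq i hiN).symm
  have := hmin (j2 - j1) hP hper
  omega

/-- if `c_0 … c_{N-1} ∈ W` and the infinite word `(c_0 ⋯ c_{N-1})^∞`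
has minimal period exactly `N`, then
`gcd(c_0 b^{N-1} + ⋯ + c_{N-1}, b^N - 1) ≪_{b,W} b^N / N^{1/Δ}`. -/
theorem stmt_13 (b : ℕ) (hb : 3 ≤ b) (W : Finset ℕ)
    (hWsub : W ⊆ Finset.range b) (hW2 : 2 ≤ W.card) (hWne : W ≠ Finset.range b)
    (Δ : ℝ) (hΔ : Δ = Real.log W.card / Real.log b) :
    ∃ K : ℝ, 0 < K ∧ ∀ (N : ℕ) (c : ℕ → ℕ), 1 ≤ N →
      (∀ i, i < N → c i ∈ W) →
      (∀ P : ℕ, 0 < P → (∀ j : ℕ, c ((j + P) % N) = c (j % N)) → N ≤ P) →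
      ((Nat.gcd (∑ i ∈ Finset.range N, c i * b ^ (N - 1 - i)) (b ^ N - 1) : ℕ) : ℝ) ≤
        K * (b : ℝ) ^ N / (N : ℝ) ^ (1 / Δ) := by
  refine ⟨(b : ℝ), by positivity, ?_⟩
  intro N c hN hc hmin
  have hb2 : 1 < b := by omega
  have hdig : ∀ k, k < N → c k < b := fun k hk => Finset.mem_range.mp (hWsub (hc k hk))
  have hbN1 : 1 ≤ b ^ N := Nat.one_le_pow _ _ (by omega)
  have hbNb : b ≤ b ^ N := Nat.le_self_pow (by omega) b
  set D := b ^ N - 1 with hD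
  have hD2 : 2 ≤ D := by omega
  set S := ∑ i ∈ Finset.range N, c i * b ^ (N - 1 - i) with hS
  set g := Nat.gcd S D with hg
  have hgD : g ∣ D := Nat.gcd_dvd_right _ _
  have hg0 : 0 < g := Nat.gcd_pos_of_pos_right _ (by omega)
  have hwv0 : wv b N c 0 = S := by
    unfold wv
    apply Finset.sum_congr rfl
    intro i hi
    rw [add_zero, Nat.mod_eq_of_lt (Finset.mem_range.mp hi)]
  have hgwv : ∀ j, g ∣ wv b N c j :=
    wv_dvd b N c (by omega) hN g (hwv0 ▸ Nat.gcd_dvd_left S D) hgD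
  set q := D / g with hq
  have hqg : g * q = D := Nat.mul_div_cancel' hgD
  have hq0 : 0 < q := by
    rcases Nat.eq_zero_or_pos q with h | h
    · rw [h, Nat.mul_zero] at hqg; omega
    · exact h
  set L := Nat.log b q + 1 with hL
  have hqL : q < b ^ L := Nat.lt_pow_succ_log_self hb2 q
  have hLq : b ^ (L - 1) ≤ q := by
    have : L - 1 = Nat.log b q := by omega
    rw [this]
    exact Nat.pow_log_le_self b hq0.ne'
  have hqD : q ≤ D := Nat.div_le_self D g
  have hLN : L ≤ N := by
    have : Nat.log b q < N := (Nat.log_lt_iff_lt_pow hb2 hq0.ne').mpr (by omega)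
    omega
  have hgpow : b ^ (N - L) ≤ g := by
    have h2 : g * (q + 1) ≤ g * b ^ L := Nat.mul_le_mul_left g hqL
    have h3 : g * (q + 1) = D + g := by rw [Nat.mul_add, hqg, Nat.mul_one]
    have h1 : b ^ N ≤ g * b ^ L := by omega
    have h4 : b ^ (N - L) * b ^ L ≤ g * b ^ L := by
      rw [← pow_add, Nat.sub_add_cancel hLN]; exact h1
    exact Nat.le_of_mul_le_mul_right h4 (pow_pos (by omega) L)
  -- counting: N ≤ |W| ^ L
  have hcount : N ≤ W.card ^ L := by
    have hmemW : ∀ (i j : ℕ), c ((i + j) % N) ∈ W := fun i j => hc _ (Nat.mod_lt _ (by omega))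
    set f : Fin N → (Fin L → {x // x ∈ W}) := fun j i => ⟨c ((i.1 + j.1) % N), hmemW _ _⟩ with hf
    have hsplit : ∀ j : ℕ, wv b N c j =
        (∑ i ∈ Finset.range L, c ((i + j) % N) * b ^ (N - 1 - i))
        + (∑ i ∈ Finset.Ico L N, c ((i + j) % N) * b ^ (N - 1 - i)) := by
      intro j
      unfold wv
      rw [Finset.range_eq_Ico, ← Finset.sum_Ico_consecutive _ (Nat.zero_le L) hLN,
        ← Finset.range_eq_Ico]
    have htail : ∀ j : ℕ,
        (∑ i ∈ Finset.Ico L N, c ((i + j) % N) * b ^ (N - 1 - i)) ≤ b ^ (N - L) - 1 := by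
      intro j
      calc (∑ i ∈ Finset.Ico L N, c ((i + j) % N) * b ^ (N - 1 - i))
          ≤ ∑ i ∈ Finset.Ico L N, (b - 1) * b ^ (N - 1 - i) := by
            apply Finset.sum_le_sum
            intro i _
            have := hdig _ (Nat.mod_lt (i + j) (show 0 < N by omega))
            exact Nat.mul_le_mul_right _ (by omega)
        _ = b ^ (N - L) - 1 := by
            rw [Finset.sum_Ico_eq_sum_range]
            have h5 : (∑ k ∈ Finset.range (N - L), (b - 1) * b ^ (N - 1 - (L + k)))
                = ∑ k ∈ Finset.range (N - L), (b - 1) * b ^ ((N - L) - 1 - k) := by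
              apply Finset.sum_congr rfl
              intro k _
              have : N - 1 - (L + k) = (N - L) - 1 - k := by omega
              rw [this]
            rw [h5, Finset.sum_range_reflect (fun k => (b - 1) * b ^ k) (N - L)]
            have h6 : (∑ k ∈ Finset.range (N - L), (b - 1) * b ^ k)
                = (∑ k ∈ Finset.range (N - L), b ^ k) * (b - 1) := by
              rw [Finset.sum_mul]
              exact Finset.sum_congr rfl fun k _ => mul_comm _ _
            rw [h6, geom_nat _ _ (by omega)]
    have hfinj : Function.Injective f := by
      intro j1 j2 hfeq
      have hpre : ∀ i, i < L → c ((i + j1.1) % N) = c ((i + j2.1) % N) := by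
        intro i hi
        have := congrFun hfeq ⟨i, hi⟩
        exact Subtype.ext_iff.mp this
      have hHeq : (∑ i ∈ Finset.range L, c ((i + j1.1) % N) * b ^ (N - 1 - i))
          = ∑ i ∈ Finset.range L, c ((i + j2.1) % N) * b ^ (N - 1 - i) := by
        apply Finset.sum_congr rfl
        intro i hi
        rw [hpre i (Finset.mem_range.mp hi)]
      have hd1 : (g : ℤ) ∣ (wv b N c j1.1 : ℤ) := Int.natCast_dvd_natCast.mpr (hgwv j1.1)
      have hd2 : (g : ℤ) ∣ (wv b N c j2.1 : ℤ) := Int.natCast_dvd_natCast.mpr (hgwv j2.1)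
      have hdvd : (g : ℤ) ∣ (wv b N c j2.1 : ℤ) - (wv b N c j1.1 : ℤ) := dvd_sub hd2 hd1
      have habs : |(wv b N c j2.1 : ℤ) - (wv b N c j1.1 : ℤ)| < (g : ℤ) := by
        have e1 := hsplit j1.1
        have e2 := hsplit j2.1
        rw [hHeq] at e1
        have t1 := htail j1.1
        have t2 := htail j2.1
        have hBg : b ^ (N - L) ≤ g := hgpow
        have hB1 : 1 ≤ b ^ (N - L) := Nat.one_le_pow _ _ (by omega)
        rw [abs_lt]
        constructor <;> omega
      have h0 : (wv b N c j2.1 : ℤ) - (wv b N c j1.1 : ℤ) = 0 :=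
        Int.eq_zero_of_abs_lt_dvd hdvd habs
      have hweq : wv b N c j1.1 = wv b N c j2.1 := by
        have : (wv b N c j1.1 : ℤ) = (wv b N c j2.1 : ℤ) := by omega
        exact_mod_cast this
      exact Fin.ext (wv_inj b N c hN hdig hmin j1.1 j2.1 j1.2 j2.2 hweq)
    calc N = Fintype.card (Fin N) := (Fintype.card_fin N).symm
      _ ≤ Fintype.card (Fin L → {x // x ∈ W}) := Fintype.card_le_of_injective f hfinj
      _ = W.card ^ L := by simp [Fintype.card_fun, Fintype.card_coe]
  -- real endgame
  have hlogb : (0 : ℝ) < Real.log b := Real.log_pos (by exact_mod_cast hb2)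
  have hlogW : (0 : ℝ) < Real.log W.card :=
    Real.log_pos (by exact_mod_cast (by omega : 1 < W.card))
  have hΔpos : 0 < Δ := by rw [hΔ]; exact div_pos hlogW hlogb
  have hWcard0 : (0 : ℝ) < (W.card : ℝ) := by exact_mod_cast (by omega : 0 < W.card)
  have hWb : (W.card : ℝ) ^ (1 / Δ) = b := by
    rw [hΔ, one_div_div, Real.rpow_def_of_pos hWcard0]
    have h7 : Real.log (W.card : ℝ) * (Real.log b / Real.log (W.card : ℝ)) = Real.log b := by
      field_simp
    rw [h7, Real.exp_log (by positivity)]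
  have hN0 : (0 : ℝ) < (N : ℝ) := by exact_mod_cast (by omega : 0 < N)
  have hNrpow_pos : (0 : ℝ) < (N : ℝ) ^ (1 / Δ) := Real.rpow_pos_of_pos hN0 _
  have hNle : ((N : ℝ)) ^ (1 / Δ) ≤ (b : ℝ) ^ L := by
    have h1 : (N : ℝ) ≤ ((W.card : ℝ)) ^ (L : ℕ) := by exact_mod_cast hcount
    have h2 := Real.rpow_le_rpow (by positivity) h1 (le_of_lt (by positivity : (0 : ℝ) < 1 / Δ))
    rwa [← Real.rpow_natCast ((W.card : ℝ)) L, ← Real.rpow_mul (le_of_lt hWcard0), mul_comm,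
      Real.rpow_mul (le_of_lt hWcard0), Real.rpow_natCast, hWb] at h2
  have hfin_nat : g * b ^ L ≤ b ^ N * b := by
    calc g * b ^ L = (g * b ^ (L - 1)) * b := by
          rw [mul_assoc, ← pow_succ, Nat.sub_add_cancel (by omega : 1 ≤ L)]
      _ ≤ (g * q) * b := by gcongr
      _ = D * b := by rw [hqg]
      _ ≤ b ^ N * b := by gcongr; omega
  rw [le_div_iff₀ hNrpow_pos]
  calc (g : ℝ) * (N : ℝ) ^ (1 / Δ) ≤ (g : ℝ) * (b : ℝ) ^ L := by gcongr
    _ = ((g * b ^ L : ℕ) : ℝ) := by push_cast; ring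
    _ ≤ ((b ^ N * b : ℕ) : ℝ) := by exact_mod_cast hfin_nat
    _ = (b : ℝ) * (b : ℝ) ^ N := by push_cast; ring
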